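/- Let G be a simple graph on a vertex type V and let D be a natural number with D ≥ 1 such that every vertex of G has a finite set of neighbours with at most D elements. A finite set S of vertices is called connected if the subgraph of G induced on S is connected, and |S| denotes its cardinality. If κ is a real number with κ ≥ 4·log D + 2·log 2, then for every vertex v the family (exp(−κ·|X|))_X, indexed by the connected finite vertex sets X with v ∈ X, is summable and Σ_X exp(−κ·|X|) ≤ exp(−κ/2). -/

import Mathlib

open SimpleGraph

section Aux

variable {V : Type*}

private lemma reach_in_induce {G : SimpleGraph V} {s : Set V} :
    ∀ {x y : V} (w : G.Walk x y), (∀ z ∈ w.support, z ∈ s) →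
      ∀ (hx : x ∈ s) (hy : y ∈ s), (G.induce s).Reachable ⟨x, hx⟩ ⟨y, hy⟩ := by
  intro x y w
  induction w with
  | nil => intro _ hx hy; exact Reachable.refl _
  | @cons x b y h p ih =>
    intro hs hx hy
    have hb : b ∈ s := hs b (by rw [Walk.support_cons]; exact List.mem_cons_of_mem _ p.start_mem_support)
    have hadj : (G.induce s).Adj ⟨x, hx⟩ ⟨b, hb⟩ := h
    exact hadj.reachable.trans (ih (fun z hz => hs z (by rw [Walk.support_cons]; exact List.mem_cons_of_mem _ hz)) hb hy)

private lemma exists_spanning_walk {G : SimpleGraph V} :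
    ∀ (n : ℕ) (X : Finset V) (v : V), v ∈ X → X.card = n →
      (G.induce (X : Set V)).Connected →
      ∃ w : G.Walk v v, (∀ z ∈ w.support, z ∈ X) ∧ (∀ z ∈ X, z ∈ w.support) ∧
        w.length = 2 * (n - 1) := by
  intro n
  induction n using Nat.strong_induction_on with
  | _ n ih =>
  intro X v hv hcard hconn
  rcases n with _ | m
  · have := Finset.card_pos.mpr ⟨v, hv⟩; omega
  rcases m with _ | m
  · obtain ⟨a, rfl⟩ := Finset.card_eq_one.mp hcard
    have hva : v = a := Finset.mem_singleton.mp hv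
    subst hva
    exact ⟨Walk.nil, by simp, by simp, by simp⟩
  · classical
    set s : Set V := (X : Set V) with hs
    haveI : Fintype s := FinsetCoe.fintype X
    set H := G.induce s with hH
    set a : s := ⟨v, hv⟩ with ha
    obtain ⟨u, -, hmax⟩ := Finset.exists_max_image Finset.univ (fun x : s => H.dist a x)
      ⟨a, Finset.mem_univ a⟩
    obtain ⟨b, hbX, hbv⟩ := Finset.exists_mem_ne (s := X) (by omega) v
    have hba : a ≠ (⟨b, hbX⟩ : s) := fun hh => hbv (congrArg Subtype.val hh).symm
    have hdistb : 0 < H.dist a ⟨b, hbX⟩ := hconn.pos_dist_of_ne hba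
    have hdistu : 0 < H.dist a u := lt_of_lt_of_le hdistb (hmax _ (Finset.mem_univ _))
    have hua : u ≠ a := by
      intro hh; rw [hh] at hdistu; simp [SimpleGraph.dist_self] at hdistu
    -- every other vertex can be reached avoiding u
    have hclaim : ∀ x : s, x ≠ u → ∃ p : H.Walk a x, u ∉ p.support := by
      intro x hxu
      obtain ⟨p, hp⟩ := (hconn.preconnected a x).exists_walk_length_eq_dist
      by_cases hup : u ∈ p.support
      · exfalso
        have h1 : H.dist a u ≤ (p.takeUntil u hup).length := SimpleGraph.dist_le _
        have h2 : (p.takeUntil u hup).length + (p.dropUntil u hup).length = p.length := by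
          have := congrArg Walk.length (Walk.take_spec p hup)
          rwa [Walk.length_append] at this
        have h3 : (p.dropUntil u hup).length ≠ 0 := fun h0 =>
          hxu (Walk.eq_of_length_eq_zero h0).symm
        have h4 : H.dist a x ≤ H.dist a u := hmax x (Finset.mem_univ x)
        omega
      · exact ⟨p, hup⟩
    -- a neighbour t of u
    obtain ⟨p₀⟩ := hconn.preconnected u a
    obtain ⟨t, hadjut, q₀, -⟩ := Walk.exists_eq_cons_of_ne hua p₀
    have hvu : v ≠ (u : V) := fun hh => hua (Subtype.ext hh.symm)
    set X' := X.erase (u : V) with hX'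
    have huX : (u : V) ∈ X := Finset.mem_coe.mp u.2
    have hvX' : v ∈ X' := Finset.mem_erase.mpr ⟨hvu, hv⟩
    have hcard' : X'.card = m + 1 := by
      rw [hX', Finset.card_erase_of_mem huX]; omega
    -- walks within X' from v to any vertex of X'
    have hwalk' : ∀ x : V, x ∈ X' → ∃ w : G.Walk v x, ∀ z ∈ w.support, z ∈ X' := by
      intro x hx
      have hxX : x ∈ X := Finset.mem_of_mem_erase hx
      have hxu : (⟨x, hxX⟩ : s) ≠ u := fun hh =>
        (Finset.mem_erase.mp hx).1 (congrArg Subtype.val hh)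
      obtain ⟨p, hup⟩ := hclaim ⟨x, hxX⟩ hxu
      refine ⟨p.map (SimpleGraph.Embedding.induce s).toHom, ?_⟩
      intro z hz
      replace hz : z ∈ p.support.map (SimpleGraph.Embedding.induce (G := G) s).toHom := by
        rw [← Walk.support_map]; exact hz
      rw [List.mem_map] at hz
      obtain ⟨c, hc, rfl⟩ := hz
      show (c : V) ∈ X'
      refine Finset.mem_erase.mpr ⟨?_, Finset.mem_coe.mp c.2⟩
      intro hh
      exact hup (Subtype.ext hh ▸ hc)
    have hconn' : (G.induce (X' : Set V)).Connected := by
      have key : ∀ x : (X' : Set V), (G.induce (X' : Set V)).Reachable ⟨v, hvX'⟩ x := by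
        intro x
        obtain ⟨w, hw⟩ := hwalk' (x : V) (Finset.mem_coe.mp x.2)
        have hr := reach_in_induce (s := (X' : Set V)) w
          (fun z hz => Finset.mem_coe.mpr (hw z hz)) (Finset.mem_coe.mpr hvX') x.2
        exact (Subtype.coe_eta x x.2) ▸ hr
      rw [connected_iff]
      exact ⟨fun x y => (key x).symm.trans (key y), ⟨⟨v, Finset.mem_coe.mpr hvX'⟩⟩⟩
    obtain ⟨w', hw'sub, hw'cov, hw'len⟩ := ih (m + 1) (by omega) X' v hvX' hcard' hconn'
    have htu : (t : V) ≠ (u : V) := fun hh => hadjut.ne (Subtype.ext hh.symm)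
    have htX' : (t : V) ∈ X' := Finset.mem_erase.mpr ⟨htu, Finset.mem_coe.mp t.2⟩
    have htsup : (t : V) ∈ w'.support := hw'cov _ htX'
    have hadjG : G.Adj (t : V) (u : V) := hadjut.symm
    set q₁ := w'.takeUntil (t : V) htsup with hq₁
    set q₂ := w'.dropUntil (t : V) htsup with hq₂
    have hlen12 : q₁.length + q₂.length = w'.length := by
      have := congrArg Walk.length (Walk.take_spec w' htsup)
      rwa [Walk.length_append] at this
    refine ⟨q₁.append (Walk.cons hadjG (Walk.cons hadjG.symm q₂)), ?_, ?_, ?_⟩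
    · intro z hz
      rw [Walk.mem_support_append_iff] at hz
      rcases hz with hz | hz
      · exact Finset.mem_of_mem_erase (hw'sub z (Walk.support_takeUntil_subset _ _ hz))
      · rw [Walk.support_cons] at hz
        rcases List.mem_cons.mp hz with rfl | hz
        · exact Finset.mem_coe.mp t.2
        · rw [Walk.support_cons] at hz
          rcases List.mem_cons.mp hz with rfl | hz
          · exact huX
          · exact Finset.mem_of_mem_erase (hw'sub z (Walk.support_dropUntil_subset _ _ hz))
    · intro z hzX
      rw [Walk.mem_support_append_iff]
      by_cases hzu : z = (u : V)
      · subst hzu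
        refine Or.inr ?_
        rw [Walk.support_cons]
        exact List.mem_cons_of_mem _ (by rw [Walk.support_cons]; exact List.mem_cons_self)
      · have hz' : z ∈ X' := Finset.mem_erase.mpr ⟨hzu, hzX⟩
        have hzsup : z ∈ w'.support := hw'cov z hz'
        rw [← Walk.take_spec w' htsup, Walk.mem_support_append_iff] at hzsup
        rcases hzsup with hz | hz
        · exact Or.inl hz
        · refine Or.inr ?_
          rw [Walk.support_cons]
          refine List.mem_cons_of_mem _ ?_
          rw [Walk.support_cons]
          exact List.mem_cons_of_mem _ hz
    · rw [Walk.length_append, Walk.length_cons, Walk.length_cons]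
      omega

private lemma card_walkLength_le (G : SimpleGraph V) [DecidableEq V] [G.LocallyFinite]
    (D : ℕ) (hdeg : ∀ u : V, G.degree u ≤ D) :
    ∀ (n : ℕ) (u v : V), (G.finsetWalkLength n u v).card ≤ D ^ n := by
  intro n
  induction n with
  | zero =>
    intro u v
    rw [pow_zero]
    refine Finset.card_le_one.mpr (fun p hp q hq => ?_)
    have hp' := SimpleGraph.mem_finsetWalkLength_iff.mp hp
    have hq' := SimpleGraph.mem_finsetWalkLength_iff.mp hq
    have huv : u = v := Walk.eq_of_length_eq_zero hp'
    subst huv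
    rw [Walk.eq_nil_iff_nil.mpr (Walk.length_eq_zero_iff.mp hp'), Walk.eq_nil_iff_nil.mpr (Walk.length_eq_zero_iff.mp hq')]
  | succ n ihn =>
    intro u v
    have hdef : G.finsetWalkLength (n + 1) u v =
        Finset.univ.biUnion fun (w : G.neighborSet u) =>
          (G.finsetWalkLength n w v).map ⟨fun p => Walk.cons w.property p, fun _ _ h => by cases h; rfl⟩ :=
      rfl
    rw [hdef]
    calc (Finset.univ.biUnion fun (w : G.neighborSet u) =>
          (G.finsetWalkLength n w v).map ⟨fun p => Walk.cons w.property p, fun _ _ h => by cases h; rfl⟩).card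
        ≤ ∑ w : G.neighborSet u, ((G.finsetWalkLength n w v).map
            ⟨fun p => Walk.cons w.property p, fun _ _ h => by cases h; rfl⟩).card :=
          Finset.card_biUnion_le
      _ ≤ ∑ _w : G.neighborSet u, D ^ n := by
          refine Finset.sum_le_sum (fun w _ => ?_)
          rw [Finset.card_map]
          exact ihn _ _
      _ = Fintype.card (G.neighborSet u) * D ^ n := by
          rw [Finset.sum_const, Finset.card_univ, smul_eq_mul]
      _ ≤ D * D ^ n := by
          have := hdeg u
          rw [SimpleGraph.card_neighborSet_eq_degree]
          exact Nat.mul_le_mul_right _ this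
      _ = D ^ (n + 1) := by ring

end Aux

/-- Connected polymer sum (Lemma D.1 of the paper): in a graph in which
every vertex has at most `D ≥ 1` neighbours, if `κ ≥ 4 log D + 2 log 2` then for every
vertex `v` the sum of `exp(−κ|X|)` over all connected finite vertex sets `X` containing `v`
converges and is at most `exp(−κ/2)`. -/
theorem connected_polymer_sum
    {V : Type*} (G : SimpleGraph V) (D : ℕ) (hD : 1 ≤ D)
    (hdeg : ∀ v : V, (G.neighborSet v).Finite ∧ (G.neighborSet v).ncard ≤ D)
    (κ : ℝ) (hκ : 4 * Real.log D + 2 * Real.log 2 ≤ κ) (v : V) :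
    Summable (fun X : {X : Finset V // v ∈ X ∧ (G.induce (X : Set V)).Connected} =>
      Real.exp (-κ * (X.1.card : ℝ))) ∧
    ∑' X : {X : Finset V // v ∈ X ∧ (G.induce (X : Set V)).Connected},
      Real.exp (-κ * (X.1.card : ℝ)) ≤ Real.exp (-κ / 2) := by
  classical
  letI : G.LocallyFinite := fun w => (hdeg w).1.fintype
  have hdeg' : ∀ u : V, G.degree u ≤ D := by
    intro u
    have h1 : G.degree u = (G.neighborSet u).ncard := by
      rw [show G.degree u = (G.neighborSet u).toFinset.card from rfl,
        ← Set.ncard_eq_toFinset_card']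
    rw [h1]; exact (hdeg u).2
  -- numeric facts
  have hD1 : (1 : ℝ) ≤ (D : ℝ) := by exact_mod_cast hD
  have hlogD : 0 ≤ Real.log D := Real.log_nonneg hD1
  have hexpκ : Real.exp (-κ) ≤ 1 / (4 * (D : ℝ) ^ 4) := by
    have h4 : Real.log ((4 : ℝ) * (D : ℝ) ^ 4) ≤ κ := by
      rw [Real.log_mul (by norm_num) (by positivity), Real.log_pow,
        show (4 : ℝ) = 2 ^ 2 by norm_num, Real.log_pow]
      push_cast
      linarith
    calc Real.exp (-κ) ≤ Real.exp (-Real.log (4 * (D : ℝ) ^ 4)) :=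
          Real.exp_le_exp.mpr (by linarith)
      _ = 1 / (4 * (D : ℝ) ^ 4) := by
          rw [Real.exp_neg, Real.exp_log (by positivity), one_div]
  have hhalf : Real.exp (-κ / 2) ≤ 1 / 2 := by
    have : -κ / 2 ≤ -Real.log 2 := by linarith
    calc Real.exp (-κ / 2) ≤ Real.exp (-Real.log 2) := Real.exp_le_exp.mpr this
      _ = 1 / 2 := by rw [Real.exp_neg, Real.exp_log (by norm_num), one_div]
  set r : ℝ := (D : ℝ) ^ 2 * Real.exp (-κ) with hrdef
  have hr0 : 0 ≤ r := by positivity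
  have hr : r ≤ 1 / 4 := by
    have hD2 : (1 : ℝ) ≤ (D : ℝ) ^ 2 := one_le_pow₀ hD1
    have : (D : ℝ) ^ 2 * Real.exp (-κ) ≤ (D : ℝ) ^ 2 * (1 / (4 * (D : ℝ) ^ 4)) :=
      mul_le_mul_of_nonneg_left hexpκ (by positivity)
    have h2 : (D : ℝ) ^ 2 * (1 / (4 * (D : ℝ) ^ 4)) = 1 / (4 * (D : ℝ) ^ 2) := by
      field_simp
    have h3 : 1 / (4 * (D : ℝ) ^ 2) ≤ 1 / 4 := by
      apply div_le_div_of_nonneg_left (by norm_num) (by norm_num)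
      nlinarith
    rw [hrdef]; linarith
  have hrlt : r < 1 := by linarith
  -- the sigma type of walks
  set F : ℕ → Type _ := fun n => {w : G.Walk v v // w.length = 2 * n} with hF
  letI hFfin : ∀ n, Fintype (F n) := fun n => SimpleGraph.fintypeSubtypeWalkLength G v v (2 * n)
  set g : (Σ n, F n) → ℝ := fun x => Real.exp (-κ * ((x.1 : ℝ) + 1)) with hg
  have hg0 : ∀ x, 0 ≤ g x := fun x => (Real.exp_pos _).le
  have hcardF : ∀ n, Fintype.card (F n) ≤ D ^ (2 * n) := by
    intro n
    have h1 : Fintype.card (F n) = (G.finsetWalkLength (2 * n) v v).card := by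
      rw [← SimpleGraph.set_walk_length_toFinset_eq, Set.toFinset_card]
      rfl
    rw [h1]
    exact card_walkLength_le G D hdeg' (2 * n) v v
  set φ : ℕ → ℝ := fun n => Real.exp (-κ) * r ^ n with hφdef
  have hφsummable : Summable φ := (summable_geometric_of_lt_one hr0 hrlt).mul_left _
  have hfiber : ∀ n, ∑' w : F n, g ⟨n, w⟩ = (Fintype.card (F n) : ℝ) * Real.exp (-κ * ((n : ℝ) + 1)) := by
    intro n
    rw [tsum_fintype]
    simp [hg, Finset.sum_const, Finset.card_univ, nsmul_eq_mul]
  have hexp_pow : ∀ n : ℕ, Real.exp (-κ * ((n : ℝ) + 1)) = Real.exp (-κ) * Real.exp (-κ) ^ n := by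
    intro n
    rw [← Real.exp_nat_mul, ← Real.exp_add]
    ring_nf
  have hfiber_le : ∀ n, ∑' w : F n, g ⟨n, w⟩ ≤ φ n := by
    intro n
    rw [hfiber n]
    have h1 : (Fintype.card (F n) : ℝ) ≤ ((D : ℝ) ^ (2 * n)) := by
      exact_mod_cast hcardF n
    calc (Fintype.card (F n) : ℝ) * Real.exp (-κ * ((n : ℝ) + 1))
        ≤ (D : ℝ) ^ (2 * n) * Real.exp (-κ * ((n : ℝ) + 1)) :=
          mul_le_mul_of_nonneg_right h1 (Real.exp_pos _).le
      _ = φ n := by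
          rw [hexp_pow n]
          simp only [hφdef, hrdef, mul_pow, pow_mul]
          ring
  have hfiber_nonneg : ∀ n, 0 ≤ ∑' w : F n, g ⟨n, w⟩ := fun n =>
    tsum_nonneg (fun w => hg0 _)
  have hsum2 : Summable (fun n => ∑' w : F n, g ⟨n, w⟩) :=
    Summable.of_nonneg_of_le hfiber_nonneg hfiber_le hφsummable
  have hgsummable : Summable g :=
    (summable_sigma_of_nonneg hg0).mpr ⟨fun n => Summable.of_finite, hsum2⟩
  have htsumg : ∑' x, g x ≤ Real.exp (-κ / 2) := by
    have h1 : ∑' x, g x = ∑' n, ∑' w : F n, g ⟨n, w⟩ := hgsummable.tsum_sigma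
    have h2 : ∑' n, ∑' w : F n, g ⟨n, w⟩ ≤ ∑' n, φ n :=
      Summable.tsum_le_tsum hfiber_le hsum2 hφsummable
    have h3 : ∑' n, φ n = Real.exp (-κ) * (1 - r)⁻¹ := by
      rw [hφdef, tsum_mul_left, tsum_geometric_of_lt_one hr0 hrlt]
    have h4 : (1 - r)⁻¹ ≤ (3 / 4 : ℝ)⁻¹ := by
      apply inv_anti₀ (by norm_num)
      linarith
    have hepos : 0 < Real.exp (-κ / 2) := Real.exp_pos _
    have hexpsplit : Real.exp (-κ) = Real.exp (-κ / 2) * Real.exp (-κ / 2) := by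
      rw [← Real.exp_add]; ring_nf
    have h5 : Real.exp (-κ) * (1 - r)⁻¹ ≤ Real.exp (-κ / 2) := by
      rw [hexpsplit]
      nlinarith [hepos.le, hhalf]
    rw [h1]
    linarith
  -- the injection
  set S := {X : Finset V // v ∈ X ∧ (G.induce (X : Set V)).Connected} with hS
  have hspan : ∀ X : S, ∃ w : G.Walk v v, (∀ z ∈ w.support, z ∈ X.1) ∧
      (∀ z ∈ X.1, z ∈ w.support) ∧ w.length = 2 * (X.1.card - 1) :=
    fun X => exists_spanning_walk X.1.card X.1 v X.2.1 rfl X.2.2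
  choose wX h1X h2X h3X using hspan
  set ι : S → Σ n, F n := fun X => ⟨X.1.card - 1, ⟨wX X, h3X X⟩⟩ with hι
  have hXeq : ∀ X : S, X.1 = (wX X).support.toFinset := by
    intro X
    apply Finset.ext
    intro z
    rw [List.mem_toFinset]
    exact ⟨h2X X z, h1X X z⟩
  have hinj : Function.Injective ι := by
    intro X Y h
    have hw : wX X = wX Y := congrArg (fun x : Σ n, F n => (x.2 : G.Walk v v)) h
    apply Subtype.ext
    rw [hXeq X, hXeq Y, hw]
  have hcard1 : ∀ X : S, 1 ≤ X.1.card := fun X => Finset.card_pos.mpr ⟨v, X.2.1⟩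
  have hfg : ∀ X : S, Real.exp (-κ * (X.1.card : ℝ)) = g (ι X) := by
    intro X
    have : ((X.1.card - 1 : ℕ) : ℝ) + 1 = (X.1.card : ℝ) := by
      have := hcard1 X
      push_cast [Nat.cast_sub this]
      ring
    simp only [hg, hι]
    rw [this]
  constructor
  · exact ((hgsummable.comp_injective hinj).congr (fun X => (hfg X).symm))
  · calc ∑' X : S, Real.exp (-κ * (X.1.card : ℝ))
        ≤ ∑' x, g x := by
          refine Summable.tsum_le_tsum_of_inj ι hinj (fun c _ => hg0 c) (fun X => (hfg X).le)
            ((hgsummable.comp_injective hinj).congr (fun X => (hfg X).symm)) hgsummable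
      _ ≤ Real.exp (-κ / 2) := htsumg
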